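/- Assume (A1), h, τ > 0, and D : ℝ^d × [0,T] → ℝ bounded and nonnegative. Let (U^n) be a solution of the scheme (S) with bounded initial datum U^0. Then ‖U^n‖_{L^∞(ℝ^d)} ≤ ‖U^0‖_{L^∞(ℝ^d)} for all n ≥ 0 with t_n ≤ T. -/

import Mathlib

open MeasureTheory Real Filter Set

noncomputable section

/-- Discrete grid point `hβ` in `ℝ^d`. -/
def zvec (d : ℕ) (h : ℝ) (β : Fin d → ℤ) : EuclideanSpace ℝ (Fin d) :=
  WithLp.toLp 2 (fun i => h * (β i : ℝ))

/-- Assumption (A1): symmetric nonnegative summable weights. -/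
def A1 (d : ℕ) (ω : (Fin d → ℤ) → ℝ) : Prop :=
  (∀ β : Fin d → ℤ, ω β = ω (-β)) ∧ (∀ β : Fin d → ℤ, 0 ≤ ω β) ∧
    Summable (fun β : {β : Fin d → ℤ // β ≠ 0} => ω β.1)

/-- Assumption (A2): moment condition on the weights. -/
def A2 (d : ℕ) (h : ℝ) (ω : (Fin d → ℤ) → ℝ) (r Cr : ℝ) : Prop :=
  Summable (fun β : {β : Fin d → ℤ // β ≠ 0} => min (‖zvec d h β.1‖ ^ r) 1 * ω β.1) ∧
    ∑' β : {β : Fin d → ℤ // β ≠ 0}, min (‖zvec d h β.1‖ ^ r) 1 * ω β.1 ≤ Cr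

/-- The discrete diffusion operator `L_h`. -/
def Lh (d : ℕ) (h : ℝ) (ω : (Fin d → ℤ) → ℝ) (ψ : EuclideanSpace ℝ (Fin d) → ℝ)
    (x : EuclideanSpace ℝ (Fin d)) : ℝ :=
  ∑' β : {β : Fin d → ℤ // β ≠ 0},
    (ψ (x + zvec d h β.1) + ψ (x - zvec d h β.1) - 2 * ψ x) * ω β.1

/-- The L1 coefficients `b_i = (i+1)^{1-α} - i^{1-α}`. -/
def bcoef (α : ℝ) (i : ℕ) : ℝ := ((i : ℝ) + 1) ^ (1 - α) - (i : ℝ) ^ (1 - α)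

/-- The L1 discrete Caputo derivative of a sequence. -/
def capD (α τ : ℝ) (v : ℕ → ℝ) (n : ℕ) : ℝ :=
  (τ ^ (-α) / Real.Gamma (2 - α)) *
    (v n - bcoef α (n - 1) * v 0 -
      ∑ k ∈ Finset.Icc 1 (n - 1), (bcoef α (n - k - 1) - bcoef α (n - k)) * v k)

/-- The L1 discrete Riemann–Liouville derivative of a sequence. -/
def rlD (α τ : ℝ) (f : ℕ → ℝ) (n : ℕ) : ℝ :=
  (τ ^ (-α) / Real.Gamma (2 - α)) *
    (f n - ∑ k ∈ Finset.range n, (bcoef α (n - k - 1) - bcoef α (n - k)) * f k)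

/-- Solution of the numerical scheme (S) on `[0,T]`:
a sequence of bounded functions satisfying the L1/`L_h` equation. -/
def SchemeSol (d : ℕ) (h τ α T : ℝ) (ω : (Fin d → ℤ) → ℝ)
    (D : EuclideanSpace ℝ (Fin d) → ℝ → ℝ)
    (U : ℕ → EuclideanSpace ℝ (Fin d) → ℝ) : Prop :=
  (∀ n : ℕ, (n : ℝ) * τ ≤ T → ∃ M : ℝ, ∀ x, |U n x| ≤ M) ∧
  (∀ n : ℕ, 1 ≤ n → (n : ℝ) * τ ≤ T → ∀ x,
    capD α τ (fun m => U m x) n = D x ((n : ℝ) * τ) * Lh d h ω (U n) x)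

/-- `‖φ‖_{X^r} ≤ K`, encoded via decomposed bounds. -/
def XNormLe (d : ℕ) (r K : ℝ) (φ : EuclideanSpace ℝ (Fin d) → ℝ) : Prop :=
  if r = 0 then ∀ x, |φ x| ≤ K
  else if r ≤ 1 then
    ∃ A B : ℝ, A + B ≤ K ∧ (∀ x, |φ x| ≤ A) ∧
      ∀ x y : EuclideanSpace ℝ (Fin d), x ≠ y → |φ x - φ y| ≤ B * ‖x - y‖ ^ r
  else
    ∃ A B C : ℝ, A + B + C ≤ K ∧ (∀ x, |φ x| ≤ A) ∧
      (∀ x y : EuclideanSpace ℝ (Fin d), |φ x - φ y| ≤ B * ‖x - y‖) ∧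
      Differentiable ℝ φ ∧
      ∀ x y : EuclideanSpace ℝ (Fin d), x ≠ y →
        ‖fderiv ℝ φ x - fderiv ℝ φ y‖ ≤ C * ‖x - y‖ ^ (r - 1)

/-- Continuous Caputo derivative. -/
def caputo (α : ℝ) (φ : ℝ → ℝ) (t : ℝ) : ℝ :=
  (1 / Real.Gamma (1 - α)) *
    ((φ t - φ 0) / t ^ α + α * ∫ s in (0:ℝ)..t, (φ t - φ s) / (t - s) ^ (1 + α))

/-- Mittag-Leffler function `E_{α,β}`. -/
def mittagLeffler (α β z : ℝ) : ℝ := ∑' k : ℕ, z ^ k / Real.Gamma (α * k + β)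

lemma bcoef_nonneg {α : ℝ} (hα : α ∈ Set.Ioo (0:ℝ) 1) (i : ℕ) : 0 ≤ bcoef α i := by
  obtain ⟨hα1, hα2⟩ := hα
  have : (i:ℝ) ^ (1-α) ≤ ((i:ℝ)+1) ^ (1-α) :=
    Real.rpow_le_rpow (Nat.cast_nonneg i) (by linarith) (by linarith)
  simp [bcoef]; linarith

lemma bcoef_zero {α : ℝ} (hα : α ∈ Set.Ioo (0:ℝ) 1) : bcoef α 0 = 1 := by
  simp [bcoef, Real.zero_rpow (by linarith [hα.2] : 1 - α ≠ 0)]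

lemma bcoef_antitone {α : ℝ} (hα : α ∈ Set.Ioo (0:ℝ) 1) (i : ℕ) :
    bcoef α (i+1) ≤ bcoef α i := by
  obtain ⟨hα1, hα2⟩ := hα
  have h := (Real.concaveOn_rpow (by linarith : (0:ℝ) ≤ 1-α)
      (by linarith : 1-α ≤ 1)).2
    (Set.mem_Ici.2 (Nat.cast_nonneg i)) (Set.mem_Ici.2 (by positivity : (0:ℝ) ≤ (i:ℝ)+2))
    (by norm_num : (0:ℝ) ≤ 1/2) (by norm_num : (0:ℝ) ≤ 1/2) (by norm_num)
  simp only [smul_eq_mul] at h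
  have harg : (1/2:ℝ) * (i:ℝ) + (1/2:ℝ) * ((i:ℝ)+2) = (i:ℝ)+1 := by ring
  rw [harg] at h
  simp only [bcoef]
  push_cast
  have h2 : ((i:ℝ)+1+1) = (i:ℝ)+2 := by ring
  rw [h2]
  linarith

lemma tele (f : ℕ → ℝ) : ∀ m : ℕ, ∑ k ∈ Finset.Icc 1 m, (f (k-1) - f k) = f 0 - f m := by
  intro m
  induction m with
  | zero => simp
  | succ m ih =>
    rw [Finset.sum_Icc_succ_top (by omega : 1 ≤ m + 1), ih]
    simp

lemma tele' (f : ℕ → ℝ) {n : ℕ} (hn : 1 ≤ n) :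
    ∑ k ∈ Finset.Icc 1 (n-1), (f (n-k-1) - f (n-k)) = f 0 - f (n-1) := by
  rw [← tele f (n-1)]
  refine Finset.sum_nbij' (fun k => n - k) (fun k => n - k) ?_ ?_ ?_ ?_ ?_
  all_goals simp only [Finset.mem_Icc]; intros; first | omega | rfl | trivial

lemma upper_aux (d : ℕ) (h τ α T : ℝ) (ω : (Fin d → ℤ) → ℝ)
    (D : EuclideanSpace ℝ (Fin d) → ℝ → ℝ)
    (U : ℕ → EuclideanSpace ℝ (Fin d) → ℝ)
    (hα : α ∈ Set.Ioo (0:ℝ) 1) (hτ : 0 < τ) (hT : 0 < T)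
    (hA1 : A1 d ω)
    (hDbdd : ∃ M : ℝ, ∀ x t, t ∈ Set.Icc (0:ℝ) T → |D x t| ≤ M)
    (hDpos : ∀ x t, t ∈ Set.Icc (0:ℝ) T → 0 ≤ D x t)
    (hU : SchemeSol d h τ α T ω D U)
    (M : ℝ) (hM0 : ∀ x, U 0 x ≤ M) :
    ∀ n : ℕ, (n : ℝ) * τ ≤ T → ∀ x, U n x ≤ M := by
  obtain ⟨hα1, hα2⟩ := hα
  have hα' : α ∈ Set.Ioo (0:ℝ) 1 := ⟨hα1, hα2⟩
  obtain ⟨MD, hMD⟩ := hDbdd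
  have hMD0 : 0 ≤ MD :=
    le_trans (abs_nonneg _) (hMD 0 0 ⟨le_refl _, hT.le⟩)
  have hΓ : 0 < Real.Gamma (2 - α) := Real.Gamma_pos_of_pos (by linarith)
  set c : ℝ := Real.Gamma (2 - α) * τ ^ α with hc
  have hcpos : 0 < c := mul_pos hΓ (Real.rpow_pos_of_pos hτ α)
  set W : ℝ := ∑' β : {β : Fin d → ℤ // β ≠ 0}, ω β.1 with hW
  have hW0 : 0 ≤ W := tsum_nonneg (fun β => hA1.2.1 β.1)
  set K : ℝ := 1 + 2 * c * MD * W with hK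
  have hKpos : 0 < K := by positivity
  intro n
  induction n using Nat.strong_induction_on with
  | _ n ih =>
  intro hnT x
  rcases Nat.eq_zero_or_pos n with rfl | hn
  · exact hM0 x
  -- boundedness of U n
  obtain ⟨Mn, hMn⟩ := hU.1 n hnT
  have hMn0 : 0 ≤ Mn := le_trans (abs_nonneg _) (hMn 0)
  -- supremum
  set S : ℝ := sSup (Set.range (U n)) with hS
  have hbdd : BddAbove (Set.range (U n)) := by
    refine ⟨Mn, ?_⟩
    rintro _ ⟨y, rfl⟩
    exact (abs_le.1 (hMn y)).2
  have hne : (Set.range (U n)).Nonempty := ⟨U n 0, Set.mem_range_self 0⟩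
  -- it suffices to show S ≤ M
  have hUleS : ∀ y, U n y ≤ S := fun y => le_csSup hbdd (Set.mem_range_self y)
  suffices hSM : S ≤ M by exact le_trans (hUleS x) hSM
  -- the rearranged equation, valid at every point
  have hrearr : ∀ y : EuclideanSpace ℝ (Fin d),
      U n y = bcoef α (n-1) * U 0 y
        + ∑ k ∈ Finset.Icc 1 (n-1), (bcoef α (n-k-1) - bcoef α (n-k)) * U k y
        + c * (D y ((n:ℝ)*τ) * Lh d h ω (U n) y) := by
    intro y
    have hEq := hU.2 n hn hnT y
    simp only [capD] at hEq
    have hταne : (τ:ℝ) ^ (-α) ≠ 0 := (Real.rpow_pos_of_pos hτ _).ne'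
    have hprod : (τ:ℝ) ^ (-α) * τ ^ α = 1 := by
      rw [← Real.rpow_add hτ]; simp
    have := congrArg (fun r => c * (Real.Gamma (2-α) / (τ ^ (-α) * Real.Gamma (2-α))) * r) hEq
    field_simp at hEq
    -- hEq : τ^(-α) * (U n y - b * U 0 y - Σ) = D * Lh * Γ  (roughly)
    -- solve for U n y
    have h2 : U n y - bcoef α (n-1) * U 0 y
        - ∑ k ∈ Finset.Icc 1 (n-1), (bcoef α (n-k-1) - bcoef α (n-k)) * U k y
        = c * (D y ((n:ℝ)*τ) * Lh d h ω (U n) y) := by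
      have h3 := congrArg (fun r => τ ^ α * r) hEq
      calc U n y - bcoef α (n-1) * U 0 y
          - ∑ k ∈ Finset.Icc 1 (n-1), (bcoef α (n-k-1) - bcoef α (n-k)) * U k y
          = τ ^ α * (τ ^ (-α) * (U n y - bcoef α (n-1) * U 0 y
            - ∑ k ∈ Finset.Icc 1 (n-1), (bcoef α (n-k-1) - bcoef α (n-k)) * U k y)) := by
            rw [← mul_assoc, mul_comm (τ^α), hprod, one_mul]
        _ = c * (D y ((n:ℝ)*τ) * Lh d h ω (U n) y) := by
            rw [h3, hc]; ring
    linarith [h2]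
  -- linear combination bound: the history part is ≤ M
  have hhist : ∀ y : EuclideanSpace ℝ (Fin d),
      bcoef α (n-1) * U 0 y
        + ∑ k ∈ Finset.Icc 1 (n-1), (bcoef α (n-k-1) - bcoef α (n-k)) * U k y ≤ M := by
    intro y
    have hcoef : ∀ k ∈ Finset.Icc 1 (n-1), 0 ≤ bcoef α (n-k-1) - bcoef α (n-k) := by
      intro k hk
      simp only [Finset.mem_Icc] at hk
      have hnk : n - k = (n - k - 1) + 1 := by omega
      rw [hnk]
      simp only [Nat.add_sub_cancel]
      linarith [bcoef_antitone hα' (n-k-1)]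
    have hterm : ∀ k ∈ Finset.Icc 1 (n-1),
        (bcoef α (n-k-1) - bcoef α (n-k)) * U k y
          ≤ (bcoef α (n-k-1) - bcoef α (n-k)) * M := by
      intro k hk
      simp only [Finset.mem_Icc] at hk
      have hkM : U k y ≤ M := by
        rcases Nat.eq_zero_or_pos k with rfl | hk1
        · exact hM0 y
        · refine ih k (by omega) ?_ y
          have : (k:ℝ) ≤ (n:ℝ) := by exact_mod_cast Nat.le_of_lt (by omega)
          nlinarith
      exact mul_le_mul_of_nonneg_left hkM (hcoef k (by simp [Finset.mem_Icc]; omega))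
    have hsum : ∑ k ∈ Finset.Icc 1 (n-1), (bcoef α (n-k-1) - bcoef α (n-k)) * U k y
        ≤ ∑ k ∈ Finset.Icc 1 (n-1), (bcoef α (n-k-1) - bcoef α (n-k)) * M :=
      Finset.sum_le_sum hterm
    have hb0 : bcoef α (n-1) * U 0 y ≤ bcoef α (n-1) * M :=
      mul_le_mul_of_nonneg_left (hM0 y) (bcoef_nonneg hα' _)
    have hsumM : ∑ k ∈ Finset.Icc 1 (n-1), (bcoef α (n-k-1) - bcoef α (n-k)) * M
        = (1 - bcoef α (n-1)) * M := by
      rw [← Finset.sum_mul, tele' (bcoef α) hn, bcoef_zero hα']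
    calc bcoef α (n-1) * U 0 y
        + ∑ k ∈ Finset.Icc 1 (n-1), (bcoef α (n-k-1) - bcoef α (n-k)) * U k y
        ≤ bcoef α (n-1) * M + (1 - bcoef α (n-1)) * M := by rw [← hsumM]; linarith
      _ = M := by ring
  -- epsilon argument
  have hkey : ∀ ε : ℝ, 0 < ε → S ≤ M + ε * K := by
    intro ε hε
    obtain ⟨_, ⟨y, rfl⟩, hy⟩ := exists_lt_of_lt_csSup hne (show S - ε < S by linarith)
    -- bound Lh
    have htnIcc : (n:ℝ) * τ ∈ Set.Icc (0:ℝ) T := ⟨by positivity, hnT⟩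
    have hsum1 : Summable (fun β : {β : Fin d → ℤ // β ≠ 0} =>
        (U n (y + zvec d h β.1) + U n (y - zvec d h β.1) - 2 * U n y) * ω β.1) := by
      refine Summable.of_norm_bounded (g := fun β : {β : Fin d → ℤ // β ≠ 0} => (4*Mn) * ω β.1) (hA1.2.2.mul_left _) ?_
      intro β
      rw [norm_mul, Real.norm_eq_abs, Real.norm_eq_abs, abs_of_nonneg (hA1.2.1 β.1)]
      refine mul_le_mul_of_nonneg_right ?_ (hA1.2.1 β.1)
      have h1 := hMn (y + zvec d h β.1)
      have h2 := hMn (y - zvec d h β.1)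
      have h3 := hMn y
      rw [abs_le] at h1 h2 h3
      rw [abs_le]
      constructor <;> nlinarith [h1.1, h1.2, h2.1, h2.2, h3.1, h3.2]
    have hsum2 : Summable (fun β : {β : Fin d → ℤ // β ≠ 0} => 2*ε * ω β.1) :=
      hA1.2.2.mul_left _
    have hLh : Lh d h ω (U n) y ≤ 2*ε*W := by
      have hle : ∀ β : {β : Fin d → ℤ // β ≠ 0},
          (U n (y + zvec d h β.1) + U n (y - zvec d h β.1) - 2 * U n y) * ω β.1
            ≤ 2*ε * ω β.1 := by
        intro β
        refine mul_le_mul_of_nonneg_right ?_ (hA1.2.1 β.1)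
        have h1 := hUleS (y + zvec d h β.1)
        have h2 := hUleS (y - zvec d h β.1)
        linarith
      calc Lh d h ω (U n) y ≤ ∑' β : {β : Fin d → ℤ // β ≠ 0}, 2*ε * ω β.1 :=
            Summable.tsum_le_tsum hle hsum1 hsum2
        _ = 2*ε*W := by rw [hW, tsum_mul_left]
    have hDLh : D y ((n:ℝ)*τ) * Lh d h ω (U n) y ≤ MD * (2*ε*W) := by
      calc D y ((n:ℝ)*τ) * Lh d h ω (U n) y
          ≤ D y ((n:ℝ)*τ) * (2*ε*W) :=
            mul_le_mul_of_nonneg_left hLh (hDpos y _ htnIcc)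
        _ ≤ MD * (2*ε*W) := by
            refine mul_le_mul_of_nonneg_right ?_ (by positivity)
            exact le_trans (le_abs_self _) (hMD y _ htnIcc)
    have hfin : U n y ≤ M + c * (MD * (2*ε*W)) := by
      rw [hrearr y]
      have := hhist y
      nlinarith [mul_le_mul_of_nonneg_left hDLh hcpos.le]
    have : S - ε < M + c * (MD * (2*ε*W)) := lt_of_lt_of_le hy hfin
    rw [hK]
    nlinarith
  by_contra hcon
  push_neg at hcon
  have hε : 0 < (S - M) / (2*K) := div_pos (by linarith) (by linarith)
  have hfin := hkey _ hε
  have h4 : (S - M) / (2*K) * K = (S - M)/2 := by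
    field_simp
  rw [h4] at hfin
  linarith

/-- L∞-stability of the scheme (S). -/
theorem scheme_linfty_stability
    (d : ℕ) (h τ α T : ℝ) (ω : (Fin d → ℤ) → ℝ)
    (D : EuclideanSpace ℝ (Fin d) → ℝ → ℝ)
    (U : ℕ → EuclideanSpace ℝ (Fin d) → ℝ)
    (hα : α ∈ Set.Ioo (0:ℝ) 1) (hh : 0 < h) (hτ : 0 < τ) (hT : 0 < T)
    (hA1 : A1 d ω)
    (hDbdd : ∃ M : ℝ, ∀ x t, t ∈ Set.Icc (0:ℝ) T → |D x t| ≤ M)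
    (hDpos : ∀ x t, t ∈ Set.Icc (0:ℝ) T → 0 ≤ D x t)
    (hU : SchemeSol d h τ α T ω D U) :
    ∀ n : ℕ, (n : ℝ) * τ ≤ T →
      ∀ M : ℝ, (∀ x, |U 0 x| ≤ M) → ∀ x, |U n x| ≤ M := by
  intro n hnT M hM x
  rw [abs_le]
  constructor
  · -- lower bound, via the negated solution
    set V : ℕ → EuclideanSpace ℝ (Fin d) → ℝ := fun m x => -(U m x) with hV
    have hV' : SchemeSol d h τ α T ω D V := by
      constructor
      · intro m hm
        obtain ⟨Mm, hMm⟩ := hU.1 m hm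
        exact ⟨Mm, fun y => by simpa [hV, abs_neg] using hMm y⟩
      · intro m hm hmT y
        have hEq := hU.2 m hm hmT y
        have hcap : capD α τ (fun j => V j y) m = - capD α τ (fun j => U j y) m := by
          simp only [capD, hV, mul_neg, Finset.sum_neg_distrib]
          ring
        have hLh : Lh d h ω (V m) y = - Lh d h ω (U m) y := by
          simp only [Lh, hV]
          rw [← tsum_neg]
          congr 1
          funext β
          ring
        rw [hcap, hLh, hEq]
        ring
    have := upper_aux d h τ α T ω D V hα hτ hT hA1 ⟨_, hDbdd.choose_spec⟩ hDpos hV' M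
      (fun y => by simp only [hV]; linarith [(abs_le.1 (hM y)).1]) n hnT x
    simp only [hV] at this
    linarith
  · exact upper_aux d h τ α T ω D U hα hτ hT hA1 hDbdd hDpos hU M
      (fun y => (abs_le.1 (hM y)).2) n hnT x

end
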